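/- Let k, n be integers with 3 ≤ k ≤ n, and let G be a graph of order n. Then τ_k(G) · τ_k(Ḡ) ≤ ⌊(n − k)/2⌋², where Ḡ is the complement of G. -/

import Mathlib

open SimpleGraph Finset

variable {V : Type*}

/-- A pedant `S`-Steiner tree in `G`: a subtree of `G` containing `S` in which
every vertex of `S` has degree one. -/
def IsPedantTree [Fintype V] (G : SimpleGraph V) (S : Finset V) (T : G.Subgraph) : Prop :=
  T.coe.IsTree ∧ (↑S : Set V) ⊆ T.verts ∧ ∀ v ∈ S, (T.neighborSet v).ncard = 1

/-- Two pedant `S`-Steiner trees are internally disjoint if they are edge-disjoint and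
their vertex sets intersect exactly in `S`. -/
def InternallyDisjoint [Fintype V] (G : SimpleGraph V) (S : Finset V)
    (T T' : G.Subgraph) : Prop :=
  T.edgeSet ∩ T'.edgeSet = ∅ ∧ T.verts ∩ T'.verts = (↑S : Set V)

/-- The local pedant-tree connectivity `τ_G(S)`: the maximum number of pairwise
internally disjoint pedant `S`-Steiner trees in `G`. -/
noncomputable def localPedantConn [Fintype V] (G : SimpleGraph V) (S : Finset V) : ℕ :=
  sSup {m | ∃ 𝒯 : Finset G.Subgraph, 𝒯.card = m ∧ (∀ T ∈ 𝒯, IsPedantTree G S T) ∧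
    ∀ T ∈ 𝒯, ∀ T' ∈ 𝒯, T ≠ T' → InternallyDisjoint G S T T'}

/-- The pedant tree-connectivity `τ_k(G) = min {τ_G(S) : |S| = k}`. -/
noncomputable def pedantConn [Fintype V] (G : SimpleGraph V) (k : ℕ) : ℕ :=
  sInf {m | ∃ S : Finset V, S.card = k ∧ localPedantConn G S = m}

/-- The vertex connectivity of `G`: the least size of a vertex set whose removal leaves a
graph which is not preconnected, or leaves at most one vertex. -/
noncomputable def vConn [Fintype V] (G : SimpleGraph V) : ℕ :=
  sInf {m | ∃ U : Finset V, U.card = m ∧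
    (¬ (G.induce ((↑U : Set V)ᶜ)).Preconnected ∨ Fintype.card V ≤ m + 1)}


-- auxiliary: the unique neighbor of a pendant vertex is not in S
lemma pendant_nbr_not_mem [Fintype V] {H : SimpleGraph V} {S : Finset V}
    (hS : 3 ≤ S.card) {T : H.Subgraph} (hT : IsPedantTree H S T)
    {v : V} (hv : v ∈ S) {u : V} (hu : T.neighborSet v = {u}) : u ∉ S := by
  intro huS
  have hadj : T.Adj v u := by
    have : u ∈ T.neighborSet v := by rw [hu]; rfl
    exact this
  obtain ⟨w, hw⟩ := Set.ncard_eq_one.mp (hT.2.2 u huS)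
  have hvmem : v ∈ T.neighborSet u := hadj.symm
  have hwv : w = v := by
    rw [hw] at hvmem
    exact hvmem.symm
  subst hwv
  -- find a third vertex of S
  classical
  obtain ⟨s', hs'⟩ : ((S.erase u).erase w).Nonempty := by
    rw [← Finset.card_pos]
    have h1 := Finset.card_erase_le (a := w) (s := S.erase u)
    have h2 : (S.erase u).card = S.card - 1 := Finset.card_erase_of_mem huS
    have h3 : ((S.erase u).erase w).card ≥ (S.erase u).card - 1 :=
      Finset.pred_card_le_card_erase
    omega
  rw [Finset.mem_erase, Finset.mem_erase] at hs'
  obtain ⟨hs'w, hs'u, hs'S⟩ := hs'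
  have hs'V : s' ∈ T.verts := hT.2.1 (Finset.mem_coe.mpr hs'S)
  have hwV : w ∈ T.verts := hT.2.1 (Finset.mem_coe.mpr hv)
  have hreach := (hT.1.isConnected.preconnected ⟨w, hwV⟩ ⟨s', hs'V⟩)
  obtain ⟨p⟩ := hreach
  have closure : ∀ (x y : T.verts) (p : T.coe.Walk x y),
      ((x : V) = u ∨ (x : V) = w) → ((y : V) = u ∨ (y : V) = w) := by
    intro x y p
    induction p with
    | nil => exact id
    | cons hadj' q ih =>
      intro hx
      apply ih
      rename_i x' c y'
      have hAdj : T.Adj (x' : V) (c : V) := hadj'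
      rcases hx with hx | hx
      · right
        have : (c : V) ∈ T.neighborSet u := by rw [← hx]; exact hAdj
        rwa [hw, Set.mem_singleton_iff] at this
      · left
        have : (c : V) ∈ T.neighborSet w := by rw [← hx]; exact hAdj
        rwa [hu, Set.mem_singleton_iff] at this
  have := closure _ _ p (Or.inr rfl)
  simp only at this
  tauto

-- Lemma A: a family of pairwise internally disjoint pendant S-trees injects
-- into the neighbors of v outside S.
lemma family_card_le [Fintype V] [DecidableEq V] {H : SimpleGraph V}
    [DecidableRel H.Adj] {S : Finset V} (hS : 3 ≤ S.card) {v : V} (hv : v ∈ S)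
    {𝒯 : Finset H.Subgraph} (h1 : ∀ T ∈ 𝒯, IsPedantTree H S T)
    (h2 : ∀ T ∈ 𝒯, ∀ T' ∈ 𝒯, T ≠ T' → InternallyDisjoint H S T T') :
    𝒯.card ≤ ((univ \ S).filter (fun u => H.Adj v u)).card := by
  have hex : ∀ T ∈ 𝒯, ∃ u, T.neighborSet v = {u} := fun T hT =>
    Set.ncard_eq_one.mp ((h1 T hT).2.2 v hv)
  have : Nonempty V := ⟨v⟩
  choose! f hf using hex
  have key : ∀ T ∈ 𝒯, T.Adj v (f T) ∧ f T ∉ S := by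
    intro T hT
    have hadj : T.Adj v (f T) := by
      have : f T ∈ T.neighborSet v := by rw [hf T hT]; rfl
      exact this
    exact ⟨hadj, pendant_nbr_not_mem hS (h1 T hT) hv (hf T hT)⟩
  apply Finset.card_le_card_of_injOn f
  · intro T hT
    obtain ⟨hadj, hnS⟩ := key T hT
    simp only [Finset.mem_coe, Finset.mem_filter, Finset.mem_sdiff, Finset.mem_univ, true_and]
    exact ⟨hnS, T.adj_sub hadj⟩
  · intro T hT T' hT' hff
    by_contra hne
    have hd := h2 T hT T' hT' hne
    obtain ⟨hadj, hnS⟩ := key T hT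
    obtain ⟨hadj', _⟩ := key T' (by exact hT')
    have h1' : f T ∈ T.verts := hadj.snd_mem
    have h2' : f T ∈ T'.verts := by rw [hff]; exact hadj'.snd_mem
    have : f T ∈ (↑S : Set V) := by rw [← hd.2]; exact ⟨h1', h2'⟩
    exact hnS this

-- localPedantConn bound
lemma localPedantConn_le [Fintype V] [DecidableEq V] {H : SimpleGraph V}
    [DecidableRel H.Adj] {S : Finset V} (hS : 3 ≤ S.card) {v : V} (hv : v ∈ S) :
    localPedantConn H S ≤ ((univ \ S).filter (fun u => H.Adj v u)).card := by
  apply csSup_le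
  · exact ⟨0, ∅, by simp⟩
  · rintro m ⟨𝒯, rfl, hA, hB⟩
    exact family_card_le hS hv hA hB

lemma count_partition [Fintype V] [DecidableEq V] (G : SimpleGraph V)
    [DecidableRel G.Adj] [DecidableRel Gᶜ.Adj] {S : Finset V} {v : V} (hv : v ∈ S) :
    ((univ \ S).filter (fun u => G.Adj v u)).card
      + ((univ \ S).filter (fun u => Gᶜ.Adj v u)).card = Fintype.card V - S.card := by
  have hcongr : (univ \ S).filter (fun u => Gᶜ.Adj v u)
      = (univ \ S).filter (fun u => ¬ G.Adj v u) := by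
    apply Finset.filter_congr
    intro u hu
    simp only [Finset.mem_sdiff] at hu
    rw [SimpleGraph.compl_adj]
    exact ⟨fun h => by simpa using h.2, fun h => ⟨fun heq => hu.2 (heq ▸ hv), by simpa using h⟩⟩
  rw [hcongr, Finset.card_filter_add_card_filter_not,
    Finset.card_sdiff_of_subset (Finset.subset_univ S), Finset.card_univ]

lemma arith_lemma (a b s : ℕ) (h : a + b + 1 ≤ s) : a * b ≤ (s / 2) ^ 2 := by
  have hm : s = 2 * (s / 2) ∨ s = 2 * (s / 2) + 1 := by omega
  set m := s / 2 with hmdef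
  have h4 : 4 * (a * b) ≤ (a + b) * (a + b) := by
    rcases le_total a b with hab | hab
    · obtain ⟨d, rfl⟩ := Nat.exists_eq_add_of_le hab
      nlinarith
    · obtain ⟨d, rfl⟩ := Nat.exists_eq_add_of_le hab
      nlinarith
  rcases hm with hm | hm <;> nlinarith


/-- `τ_k(G) · τ_k(Ḡ) ≤ ⌊(n − k)/2⌋²` for `3 ≤ k ≤ n`. -/
theorem pedantConn_mul_compl [Fintype V] (G : SimpleGraph V) (k : ℕ)
    (h3 : 3 ≤ k) (hkn : k ≤ Fintype.card V) :
    pedantConn G k * pedantConn Gᶜ k ≤ ((Fintype.card V - k) / 2) ^ 2 := by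
  classical
  by_contra hcon
  push_neg at hcon
  set n := Fintype.card V with hn
  set a := pedantConn G k with haa
  set b := pedantConn Gᶜ k with hbb
  -- a, b ≥ 1
  have ha1 : 1 ≤ a := by
    rcases Nat.eq_zero_or_pos a with h | h
    · rw [h, zero_mul] at hcon; exact absurd hcon (Nat.not_lt_zero _)
    · exact h
  have hb1 : 1 ≤ b := by
    rcases Nat.eq_zero_or_pos b with h | h
    · rw [h, mul_zero] at hcon; exact absurd hcon (Nat.not_lt_zero _)
    · exact h
  have haS : ∀ S : Finset V, S.card = k → a ≤ localPedantConn G S :=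
    fun S hS => Nat.sInf_le ⟨S, hS, rfl⟩
  have hbS : ∀ S : Finset V, S.card = k → b ≤ localPedantConn Gᶜ S :=
    fun S hS => Nat.sInf_le ⟨S, hS, rfl⟩
  -- the basic counting fact
  have hsumS : ∀ S : Finset V, S.card = k → ∀ v ∈ S,
      a ≤ ((univ \ S).filter (fun u => G.Adj v u)).card ∧
      b ≤ ((univ \ S).filter (fun u => Gᶜ.Adj v u)).card ∧
      ((univ \ S).filter (fun u => G.Adj v u)).card
        + ((univ \ S).filter (fun u => Gᶜ.Adj v u)).card = n - k := by
    intro S hS v hv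
    have hS3 : 3 ≤ S.card := by omega
    refine ⟨(haS S hS).trans (localPedantConn_le hS3 hv),
      (hbS S hS).trans (localPedantConn_le hS3 hv), ?_⟩
    rw [count_partition G hv, hS]
  -- pick a base set S₀
  obtain ⟨S₀, -, hS₀⟩ := Finset.exists_subset_card_eq
    (show k ≤ (univ : Finset V).card by simpa using hkn)
  obtain ⟨v, hv⟩ := Finset.card_pos.mp (show 0 < S₀.card by omega)
  have hmain := hsumS S₀ hS₀ v hv
  have hsum : a + b ≤ n - k := by omega
  -- equality a + b = n - k
  have heq : a + b = n - k := by
    by_contra hne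
    have hlt : a + b + 1 ≤ n - k := by omega
    exact absurd (arith_lemma a b (n - k) hlt) (not_le.mpr hcon)
  -- exact counts for every S
  have hkey : ∀ S : Finset V, S.card = k → ∀ v' ∈ S,
      ((univ \ S).filter (fun u => G.Adj v' u)).card = a := by
    intro S hS v' hv'
    have := hsumS S hS v' hv'
    omega
  -- get a neighbor x and a non-neighbor y of v outside S₀
  have hAcard : ((univ \ S₀).filter (fun u => G.Adj v u)).card = a := hkey S₀ hS₀ v hv
  set A := (univ \ S₀).filter (fun u => G.Adj v u) with hAdef
  obtain ⟨x, hxA⟩ := Finset.card_pos.mp (show 0 < A.card by omega)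
  have hx := Finset.mem_filter.mp hxA
  have hxS : x ∉ S₀ := (Finset.mem_sdiff.mp hx.1).2
  have hxadj : G.Adj v x := hx.2
  obtain ⟨y, hyB⟩ := Finset.card_pos.mp
    (show 0 < ((univ \ S₀).filter (fun u => Gᶜ.Adj v u)).card by omega)
  have hy := Finset.mem_filter.mp hyB
  have hyS : y ∉ S₀ := (Finset.mem_sdiff.mp hy.1).2
  have hyadj : ¬ G.Adj v y := ((SimpleGraph.compl_adj G v y).mp hy.2).2
  -- get w ∈ S₀, w ≠ v
  obtain ⟨w, hw'⟩ := Finset.card_pos.mp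
    (show 0 < (S₀.erase v).card by rw [Finset.card_erase_of_mem hv]; omega)
  have hwv : w ≠ v := (Finset.mem_erase.mp hw').1
  have hwS : w ∈ S₀ := (Finset.mem_erase.mp hw').2
  -- helper facts
  have hwA : w ∉ A := fun h => (Finset.mem_sdiff.mp (Finset.mem_filter.mp h).1).2 hwS
  have hyA : y ∉ A := fun h => hyadj (Finset.mem_filter.mp h).2
  have hcardIns : ∀ z, z ∉ S₀ → (insert z (S₀.erase w)).card = k := by
    intro z hz
    rw [Finset.card_insert_of_notMem (fun hm => hz (Finset.mem_of_mem_erase hm)),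
      Finset.card_erase_of_mem hwS, hS₀]
    omega
  have hvin : ∀ z, v ∈ insert z (S₀.erase w) :=
    fun z => Finset.mem_insert_of_mem (Finset.mem_erase.mpr ⟨hwv.symm, hv⟩)
  have hsetEq : ∀ z, z ∉ S₀ →
      univ \ (insert z (S₀.erase w)) = insert w ((univ \ S₀).erase z) := by
    intro z hz
    have hwz : w ≠ z := fun h => hz (h ▸ hwS)
    ext u
    simp only [Finset.mem_sdiff, Finset.mem_univ, true_and, Finset.mem_insert,
      Finset.mem_erase]
    by_cases hu : u = w <;> by_cases hu2 : u = z <;> by_cases hu3 : u ∈ S₀ <;> simp_all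
  -- evaluate the count for S' = insert x (S₀.erase w)
  have e1 : ((univ \ (insert x (S₀.erase w))).filter (fun u => G.Adj v u)).card = a :=
    hkey _ (hcardIns x hxS) v (hvin x)
  rw [hsetEq x hxS, Finset.filter_insert, Finset.filter_erase, ← hAdef] at e1
  by_cases hpw : G.Adj v w
  · rw [if_pos hpw] at e1
    -- now S'' = insert y (S₀.erase w)
    have e2 : ((univ \ (insert y (S₀.erase w))).filter (fun u => G.Adj v u)).card = a :=
      hkey _ (hcardIns y hyS) v (hvin y)
    rw [hsetEq y hyS, Finset.filter_insert, Finset.filter_erase, ← hAdef, if_pos hpw] at e2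
    rw [Finset.erase_eq_of_notMem hyA] at e2
    rw [Finset.card_insert_of_notMem hwA] at e2
    omega
  · rw [if_neg hpw] at e1
    rw [Finset.card_erase_of_mem hxA] at e1
    omega
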